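/- Let P be a finite poset that is 2-wide, parity-graded with parity rank function μ, and downward Eulerian. Then for every b ∈ P, the sum over all nonempty chains C in the closed lower set {x : x ≤ b} with b ∈ C of (−1)^{ℓ(C)} equals (−1)^{μ(b)}, where ℓ(C) = |C| − 1 is the length of the chain. -/

import Mathlib

open Finset
open scoped Classical

variable {P : Type*}

/-- `P` is 2-wide: whenever `a ⋖ b ⋖ c` there is `d ≠ b` with `a ⋖ d ⋖ c`. -/
def TwoWide (P : Type*) [PartialOrder P] : Prop :=
  ∀ a b c : P, a ⋖ b → b ⋖ c → ∃ d, d ≠ b ∧ a ⋖ d ∧ d ⋖ c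

/-- `f` is a discrete Morse function. -/
def IsDMF [PartialOrder P] (f : P → ℝ) : Prop :=
  ∀ b : P, {a | a ⋖ b ∧ f b ≤ f a}.Subsingleton ∧ {c | b ⋖ c ∧ f c ≤ f b}.Subsingleton

/-- `b` is (discrete-)critical for `f`. -/
def IsCrit [PartialOrder P] (f : P → ℝ) (b : P) : Prop :=
  (∀ a, a ⋖ b → f a < f b) ∧ (∀ c, b ⋖ c → f b < f c)

/-- `μ` is a parity rank function. -/
def ParityRank [PartialOrder P] (μ : P → ℕ) : Prop :=
  (∀ a, μ a ≤ 1) ∧ (∀ a, IsMin a → μ a = 0) ∧ ∀ a b : P, a ⋖ b → μ b = 1 - μ a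

/-- Sum of `(-1)^(length C)` over all nonempty chains `C` of `P` satisfying `p`. -/
noncomputable def chainSum [PartialOrder P] [Fintype P] (p : Finset P → Prop) : ℤ :=
  ∑ C ∈ Finset.univ.filter
      (fun C : Finset P => C.Nonempty ∧ IsChain (· ≤ ·) (↑C : Set P) ∧ p C),
    (-1 : ℤ) ^ (C.card - 1)

/-- `P` is downward Eulerian with respect to `μ`. -/
def DownEulerian [PartialOrder P] [Fintype P] (μ : P → ℕ) : Prop :=
  ∀ a : P, ¬ IsMin a →
    chainSum (fun C => ∀ x ∈ C, x < a) = (-1 : ℤ) ^ (μ a + 1) + 1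

theorem stmt5 [PartialOrder P] [Fintype P] (hw : TwoWide P) (μ : P → ℕ)
    (hμ : ParityRank μ) (hE : DownEulerian μ) (b : P) :
    chainSum (fun C => (∀ x ∈ C, x ≤ b) ∧ b ∈ C) = (-1 : ℤ) ^ μ b := by
  classical
  set T : Finset (Finset P) := Finset.univ.filter
    (fun C : Finset P => IsChain (· ≤ ·) (↑C : Set P) ∧ ∀ x ∈ C, x < b) with hT
  have hstep : chainSum (fun C : Finset P => (∀ x ∈ C, x ≤ b) ∧ b ∈ C)
      = ∑ C ∈ T, (-1 : ℤ) ^ C.card := by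
    unfold chainSum
    refine Finset.sum_bij' (fun C _ => C.erase b) (fun C _ => insert b C) ?_ ?_ ?_ ?_ ?_
    · intro C hC
      simp only [hT, Finset.mem_filter, Finset.mem_univ, true_and] at hC ⊢
      obtain ⟨hne, hch, hle, hb⟩ := hC
      refine ⟨hch.mono (Finset.coe_subset.mpr (Finset.erase_subset _ _)), ?_⟩
      intro x hx
      rw [Finset.mem_erase] at hx
      exact lt_of_le_of_ne (hle x hx.2) hx.1
    · intro C hC
      simp only [hT, Finset.mem_filter, Finset.mem_univ, true_and] at hC ⊢
      obtain ⟨hch, hlt⟩ := hC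
      refine ⟨⟨b, Finset.mem_insert_self _ _⟩, ?_, ?_, Finset.mem_insert_self _ _⟩
      · rw [Finset.coe_insert]
        refine hch.insert ?_
        intro x hx _
        exact Or.inr (le_of_lt (hlt x hx))
      · intro x hx
        rcases Finset.mem_insert.mp hx with h | h
        · exact h.le
        · exact (hlt x h).le
    · intro C hC
      simp only [Finset.mem_filter, Finset.mem_univ, true_and] at hC
      exact Finset.insert_erase hC.2.2.2
    · intro C hC
      simp only [hT, Finset.mem_filter, Finset.mem_univ, true_and] at hC
      have hb : b ∉ C := fun h => lt_irrefl b (hC.2 b h)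
      exact Finset.erase_insert hb
    · intro C hC
      simp only [Finset.mem_filter, Finset.mem_univ, true_and] at hC
      rw [Finset.card_erase_of_mem hC.2.2.2]
  have hempty : (∅ : Finset P) ∈ T := by
    simp only [hT, Finset.mem_filter, Finset.mem_univ, true_and, Finset.coe_empty]
    exact ⟨Set.Subsingleton.isChain (by simp), by simp⟩
  have hsplit : ∑ C ∈ T, (-1 : ℤ) ^ C.card
      = 1 + ∑ C ∈ T.erase ∅, (-1 : ℤ) ^ C.card := by
    have h := Finset.add_sum_erase T (fun C : Finset P => (-1 : ℤ) ^ C.card) hempty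
    simp only [Finset.card_empty, pow_zero] at h
    linarith
  have hneg : ∑ C ∈ T.erase ∅, (-1 : ℤ) ^ C.card
      = - chainSum (fun C : Finset P => ∀ x ∈ C, x < b) := by
    unfold chainSum
    rw [← Finset.sum_neg_distrib]
    refine Finset.sum_congr ?_ ?_
    · ext C
      simp only [hT, Finset.mem_erase, Finset.mem_filter, Finset.mem_univ, true_and,
        Finset.nonempty_iff_ne_empty]
      try tauto
    · intro C hC
      simp only [Finset.mem_filter, Finset.mem_univ, true_and] at hC
      have h1 : 1 ≤ C.card := hC.1.card_pos
      have hc : C.card = (C.card - 1) + 1 := (Nat.sub_add_cancel h1).symm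
      conv_lhs => rw [hc]
      rw [pow_succ]; ring
  rw [hstep, hsplit, hneg]
  by_cases hmin : IsMin b
  · have h0 : chainSum (fun C : Finset P => ∀ x ∈ C, x < b) = 0 := by
      unfold chainSum
      convert Finset.sum_empty with C
      ext C
      simp only [Finset.mem_filter, Finset.notMem_empty, iff_false, not_and]
      rintro - ⟨x, hx⟩ - hlt
      exact hmin.not_lt (hlt x hx)
    rw [h0, hμ.2.1 b hmin]
    ring
  · rw [hE b hmin, pow_succ]
    ring
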